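/- Let X be a path-connected metric space, p ∈ X, let E be the quotient of the path space S_p(X) = {continuous f : [0,1] → X with f(0) = p} (with the uniform topology) by path homotopy rel endpoints, and let Q : E → X be the endpoint map Q([f]) = f(1). Then the fiber Q⁻¹(p) is canonically homeomorphic to the topological fundamental group π₁(X,p); moreover, for any x ∈ X and any path α from p to x, concatenation with α gives a homeomorphism from π₁(X,p) onto the fiber Q⁻¹(x). -/

import Mathlib

open Set Topology unitInterval

noncomputable section

/-- The loop space `C_p(X)`: continuous maps `f : [0,1] → X` with `f 0 = f 1 = p`,
with the topology of uniform convergence (the compact-open topology on `C(I,X)`,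
which agrees with uniform convergence for metric `X`). -/
def LoopSp (X : Type) [TopologicalSpace X] (p : X) : Type :=
  {f : C(unitInterval, X) // f 0 = p ∧ f 1 = p}

instance (X : Type) [TopologicalSpace X] (p : X) : TopologicalSpace (LoopSp X p) :=
  inferInstanceAs (TopologicalSpace {f : C(unitInterval, X) // f 0 = p ∧ f 1 = p})

/-- The topological fundamental group `π₁(X,p)`: the set of path components of the
loop space `C_p(X)`, with the quotient topology. -/
def TopPi1 (X : Type) [TopologicalSpace X] (p : X) : Type :=
  @Quotient (LoopSp X p) (pathSetoid _)

instance (X : Type) [TopologicalSpace X] (p : X) : TopologicalSpace (TopPi1 X p) :=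
  inferInstanceAs (TopologicalSpace (@Quotient (LoopSp X p) (pathSetoid _)))

/-- The class in `π₁(X,p)` of a loop. -/
def TopPi1.mk {X : Type} [TopologicalSpace X] {p : X} (f : LoopSp X p) : TopPi1 X p :=
  @Quotient.mk _ (pathSetoid _) f

/-- A continuous map sending `p` to `q` induces a map on loops. -/
def LoopSp.map {X Y : Type} [TopologicalSpace X] [TopologicalSpace Y] {p : X} {q : Y}
    (f : C(X, Y)) (hf : f p = q) : LoopSp X p → LoopSp Y q :=
  fun α => ⟨f.comp α.1, by simp [α.2.1, α.2.2, hf]⟩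

lemma LoopSp.continuous_map {X Y : Type} [TopologicalSpace X] [TopologicalSpace Y]
    {p : X} {q : Y} (f : C(X, Y)) (hf : f p = q) :
    Continuous (LoopSp.map f hf) :=
  Continuous.subtype_mk ((ContinuousMap.continuous_postcomp f).comp continuous_subtype_val) _

/-- The homomorphism `f_* : π₁(X,p) → π₁(Y,q)` induced by a continuous map `f` with
`f p = q`, namely `f_*[α] = [f ∘ α]`. -/
def TopPi1.map {X Y : Type} [TopologicalSpace X] [TopologicalSpace Y] {p : X} {q : Y}
    (f : C(X, Y)) (hf : f p = q) : TopPi1 X p → TopPi1 Y q :=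
  @Quotient.map _ _ (pathSetoid _) (pathSetoid _) (LoopSp.map f hf)
    (fun _ _ h => ⟨h.somePath.map (LoopSp.continuous_map f hf)⟩)

/-- A space is totally path disconnected if each of its path components is a single point. -/
def IsTotallyPathDisconnected (Y : Type) [TopologicalSpace Y] : Prop :=
  ∀ x y : Y, Joined x y → x = y

/-- A continuous surjection is a (Hurewicz) fibration if it has the homotopy lifting
property with respect to all spaces. -/
def IsFibration {E B : Type} [TopologicalSpace E] [TopologicalSpace B] (q : E → B) : Prop :=
  Function.Surjective q ∧ Continuous q ∧
    ∀ (Y : Type) [TopologicalSpace Y] (f : Y → E) (F : Y × unitInterval → B),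
      Continuous f → Continuous F → (∀ y, F (y, 0) = q (f y)) →
      ∃ G : Y × unitInterval → E, Continuous G ∧ (∀ z, q (G z) = F z) ∧
        ∀ y, G (y, 0) = f y

end

/-- The path space `S_p(X)`: continuous maps `f : [0,1] → X` with `f 0 = p`, with the
topology of uniform convergence. -/
def PathSp (X : Type) [TopologicalSpace X] (p : X) : Type :=
  {f : C(unitInterval, X) // f 0 = p}

instance (X : Type) [TopologicalSpace X] (p : X) : TopologicalSpace (PathSp X p) :=
  inferInstanceAs (TopologicalSpace {f : C(unitInterval, X) // f 0 = p})

/-- The equivalence relation of path homotopy (homotopy rel endpoints) on `S_p(X)`. -/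
def pathHomSetoid (X : Type) [TopologicalSpace X] (p : X) : Setoid (PathSp X p) where
  r f g := ContinuousMap.HomotopicRel f.1 g.1 {0, 1}
  iseqv := ⟨fun f => ContinuousMap.HomotopicRel.refl f.1, fun h => h.symm,
    fun h h' => h.trans h'⟩

/-- `E`: the quotient of the path space `S_p(X)` by path homotopy rel endpoints, with
the quotient topology. -/
def PathClasses (X : Type) [TopologicalSpace X] (p : X) : Type :=
  Quotient (pathHomSetoid X p)

instance (X : Type) [TopologicalSpace X] (p : X) : TopologicalSpace (PathClasses X p) :=
  inferInstanceAs (TopologicalSpace (Quotient (pathHomSetoid X p)))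

/-- The endpoint map `Q : E → X`, `Q([f]) = f(1)`. -/
def endMap (X : Type) [TopologicalSpace X] (p : X) : PathClasses X p → X :=
  Quotient.lift (fun f : PathSp X p => f.1 1)
    (fun _ _ h => h.some.fst_eq_snd (by simp : (1 : unitInterval) ∈ ({0, 1} : Set unitInterval)))


namespace Stmt10Aux

open ContinuousMap

theorem restrictClosed {A B : Type} [TopologicalSpace A] [TopologicalSpace B] {f : A → B}
    (hf : IsQuotientMap f) {s : Set B} (hs : IsClosed s) :
    IsQuotientMap (s.restrictPreimage f) := by
  refine isQuotientMap_iff_isClosed.2 ⟨hf.surjective.restrictPreimage _, fun U ↦ ?_⟩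
  rw [hs.isClosedEmbedding_subtypeVal.isClosed_iff_image_isClosed,
    ← hf.isClosed_preimage,
    (hs.preimage hf.continuous).isClosedEmbedding_subtypeVal.isClosed_iff_image_isClosed,
    Set.image_val_preimage_restrictPreimage]

variable {X : Type} [TopologicalSpace X] {p : X}

/-- A loop as a `Path`. -/
def toPath (γ : LoopSp X p) : Path p p := ⟨γ.1, γ.2.1, γ.2.2⟩

lemma continuous_toPath : Continuous (toPath (X := X) (p := p)) :=
  continuous_induced_rng.mpr continuous_subtype_val

/-- Path components in the loop space are exactly homotopy classes rel endpoints. -/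
lemma joined_iff {γ γ' : LoopSp X p} :
    Joined γ γ' ↔ ContinuousMap.HomotopicRel γ.1 γ'.1 {0, 1} := by
  constructor
  · rintro ⟨P⟩
    refine ⟨⟨⟨⟨fun q => (P q.1).1 q.2, ?_⟩, ?_, ?_⟩, ?_⟩⟩
    · exact continuous_eval.comp
        ((continuous_subtype_val.comp (P.continuous.comp continuous_fst)).prodMk
          continuous_snd)
    · intro s; show (P 0).1 s = γ.1 s; rw [P.source]
    · intro s; show (P 1).1 s = γ'.1 s; rw [P.target]
    · intro t s hs
      rcases hs with rfl | rfl
      · show (P t).1 0 = γ.1 0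
        rw [(P t).2.1, γ.2.1]
      · show (P t).1 1 = γ.1 1
        rw [(P t).2.2, γ.2.2]
  · rintro ⟨F⟩
    refine ⟨⟨⟨fun t => ⟨F.toContinuousMap.curry t, ?_, ?_⟩, ?_⟩, ?_, ?_⟩⟩
    · show F (t, 0) = p
      rw [F.eq_fst t (Or.inl rfl), γ.2.1]
    · show F (t, 1) = p
      rw [F.eq_fst t (Or.inr rfl), γ.2.2]
    · exact Continuous.subtype_mk F.toContinuousMap.curry.continuous _
    · exact Subtype.ext (ContinuousMap.ext fun s => F.apply_zero s)
    · exact Subtype.ext (ContinuousMap.ext fun s => F.apply_one s)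

variable (p) in
/-- The quotient map onto `E`. -/
def qm : PathSp X p → PathClasses X p := Quotient.mk (pathHomSetoid X p)

lemma isQuotientMap_qm : IsQuotientMap (qm (X := X) p) :=
  isQuotientMap_quotient_mk'

lemma continuous_endMap : Continuous (endMap X p) := by
  apply Continuous.quotient_lift
  exact continuous_eval_const 1 |>.comp continuous_subtype_val

variable {x : X}

/-- Concatenation of a loop with `α`, as a map `C_p(X) → S_p(X)`. -/
noncomputable def cat (α : Path p x) (γ : LoopSp X p) : PathSp X p :=
  ⟨((toPath γ).trans α).toContinuousMap, ((toPath γ).trans α).source'⟩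

lemma continuous_cat (α : Path p x) : Continuous (cat (p := p) α) := by
  apply Continuous.subtype_mk
  exact continuous_induced_dom.comp
    (Path.continuous_trans.comp (continuous_toPath.prodMk continuous_const))

/-- Concatenation with `α.symm`, from paths ending at `x` to loops. -/
noncomputable def uncat (α : Path p x) (f : PathSp X p) (hf : f.1 1 = x) : LoopSp X p :=
  ⟨((Path.mk f.1 f.2 hf).trans α.symm).toContinuousMap,
    ((Path.mk f.1 f.2 hf).trans α.symm).source', ((Path.mk f.1 f.2 hf).trans α.symm).target'⟩

lemma continuous_uncat (α : Path p x) :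
    Continuous (fun f : {f : PathSp X p // f.1 1 = x} => uncat α f.1 f.2) := by
  apply Continuous.subtype_mk
  refine continuous_induced_dom.comp
    (Path.continuous_trans.comp (Continuous.prodMk ?_ continuous_const))
  exact continuous_induced_rng.mpr (continuous_subtype_val.comp continuous_subtype_val)

lemma cat_rel (α : Path p x) {γ γ' : LoopSp X p} (h : Joined γ γ') :
    (pathHomSetoid X p).r (cat α γ) (cat α γ') := by
  have h1 : Path.Homotopic (toPath γ) (toPath γ') := joined_iff.mp h
  exact h1.hcomp (Path.Homotopic.refl α)

lemma uncat_rel (α : Path p x) {f g : PathSp X p} (hf : f.1 1 = x) (hg : g.1 1 = x)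
    (h : (pathHomSetoid X p).r f g) : Joined (uncat α f hf) (uncat α g hg) := by
  apply joined_iff.mpr
  have h1 : Path.Homotopic (Path.mk f.1 f.2 hf) (Path.mk g.1 g.2 hg) := h
  exact h1.hcomp (Path.Homotopic.refl α.symm)

lemma mem_fiber_cat (α : Path p x) (γ : LoopSp X p) : qm p (cat α γ) ∈ endMap X p ⁻¹' {x} := by
  show ((toPath γ).trans α).toContinuousMap 1 ∈ ({x} : Set X)
  simp

/-- The forward map `π₁(X,p) → Q⁻¹(x)`, `[γ] ↦ [γ·α]`. -/
noncomputable def hFun (α : Path p x) : TopPi1 X p → ↥(endMap X p ⁻¹' {x}) :=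
  @Quotient.lift _ _ (pathSetoid _) (fun γ => ⟨qm p (cat α γ), mem_fiber_cat α γ⟩)
    (fun _ _ h => Subtype.ext (Quot.sound (cat_rel α h)))

lemma continuous_hFun (α : Path p x) : Continuous (hFun (p := p) α) := by
  letI := pathSetoid (LoopSp X p)
  letI := pathHomSetoid X p
  exact Continuous.quotient_lift
    (Continuous.subtype_mk (isQuotientMap_qm.continuous.comp (continuous_cat α)) _) _

noncomputable def gAux (α : Path p x) (f : {f : PathSp X p // f.1 1 = x}) : TopPi1 X p :=
  TopPi1.mk (uncat α f.1 f.2)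

lemma gAux_rel (α : Path p x) (f g : {f : PathSp X p // f.1 1 = x})
    (h : (pathHomSetoid X p).r f.1 g.1) : gAux α f = gAux α g :=
  Quot.sound (uncat_rel α f.2 g.2 h)

/-- The inverse map `Q⁻¹(x) → π₁(X,p)`, `[f] ↦ [f·α⁻¹]`. -/
noncomputable def gFun (α : Path p x) (e : ↥(endMap X p ⁻¹' {x})) : TopPi1 X p :=
  gAux α ⟨Quotient.out e.1, by
    show endMap X p (Quotient.mk (pathHomSetoid X p) (Quotient.out e.1)) = x
    exact (congrArg (endMap X p) (Quotient.out_eq _)).trans e.2⟩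

lemma gFun_mk (α : Path p x) (f : PathSp X p) (hf : qm p f ∈ endMap X p ⁻¹' {x}) :
    gFun α ⟨qm p f, hf⟩ = gAux α ⟨f, hf⟩ :=
  gAux_rel α _ _ (Quotient.exact (Quotient.out_eq (qm p f)))

lemma continuous_gFun [T1Space X] (α : Path p x) : Continuous (gFun (p := p) α) := by
  letI := pathSetoid (LoopSp X p)
  have hs : IsClosed (endMap X p ⁻¹' {x}) := isClosed_singleton.preimage continuous_endMap
  have hq := restrictClosed (isQuotientMap_qm (p := p)) hs
  rw [hq.continuous_iff]
  have he : gFun α ∘ Set.restrictPreimage _ (qm p) =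
      fun f : ↥(qm p ⁻¹' (endMap X p ⁻¹' {x})) => gAux α ⟨f.1, f.2⟩ := by
    funext f
    exact gFun_mk α f.1 f.2
  rw [he]
  exact continuous_quotient_mk'.comp
    ((continuous_uncat α).comp (Continuous.subtype_mk continuous_subtype_val _))

lemma left_homotopic (α : Path p x) (γ : LoopSp X p) :
    Path.Homotopic (((toPath γ).trans α).trans α.symm) (toPath γ) := by
  have h1 : Path.Homotopic (((toPath γ).trans α).trans α.symm)
      ((toPath γ).trans (α.trans α.symm)) := ⟨Path.Homotopy.transAssoc _ _ _⟩
  have h2 : Path.Homotopic (α.trans α.symm) (Path.refl p) :=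
    ⟨(Path.Homotopy.reflTransSymm α).symm⟩
  have h3 := (Path.Homotopic.refl (toPath γ)).hcomp h2
  exact h1.trans (h3.trans ⟨Path.Homotopy.transRefl _⟩)

lemma right_homotopic (α : Path p x) (f : Path p x) :
    Path.Homotopic ((f.trans α.symm).trans α) f := by
  have h1 : Path.Homotopic ((f.trans α.symm).trans α) (f.trans (α.symm.trans α)) :=
    ⟨Path.Homotopy.transAssoc _ _ _⟩
  have h2 : Path.Homotopic (α.symm.trans α) (Path.refl x) :=
    ⟨(Path.Homotopy.reflSymmTrans α).symm⟩
  have h3 := (Path.Homotopic.refl f).hcomp h2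
  exact h1.trans (h3.trans ⟨Path.Homotopy.transRefl _⟩)

/-- The homeomorphism `π₁(X,p) ≃ₜ Q⁻¹(x)` given by concatenation with `α`. -/
noncomputable def theHomeo [T1Space X] (α : Path p x) :
    TopPi1 X p ≃ₜ ↥(endMap X p ⁻¹' {x}) where
  toFun := hFun α
  invFun := gFun α
  left_inv := by
    intro c
    induction c using Quotient.ind with
    | _ γ =>
      show gFun α ⟨qm p (cat α γ), mem_fiber_cat α γ⟩ = TopPi1.mk γ
      rw [gFun_mk]
      exact Quot.sound (joined_iff.mpr (left_homotopic α γ))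
  right_inv := by
    rintro ⟨c, hc⟩
    revert hc
    induction c using Quotient.ind with
    | _ f =>
      intro hc
      have hf : f.1 1 = x := hc
      rw [show gFun α ⟨Quotient.mk (pathHomSetoid X p) f, hc⟩ = gAux α ⟨f, hc⟩ from
        gFun_mk α f hc]
      exact Subtype.ext (Quot.sound (right_homotopic α (Path.mk f.1 f.2 hf)))
  continuous_toFun := continuous_hFun α
  continuous_invFun := continuous_gFun α

lemma theHomeo_apply [T1Space X] (α : Path p x) (γ : LoopSp X p) :
    (theHomeo α (TopPi1.mk γ)).1 = qm p (cat α γ) := rfl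

end Stmt10Aux

/-- For a path-connected metric space `X` with `p ∈ X`, the fibre `Q⁻¹(p)` of the
endpoint fibration `Q : E → X` is canonically homeomorphic to the topological
fundamental group `π₁(X,p)` (via `[γ] ↦ [γ]`), and for any `x ∈ X` and any path `α`
from `p` to `x`, concatenation with `α` gives a homeomorphism of `π₁(X,p)` onto the
fibre `Q⁻¹(x)`. -/
theorem stmt10 (X : Type) [MetricSpace X] [PathConnectedSpace X] (p : X) :
    (∃ h : TopPi1 X p ≃ₜ ↥(endMap X p ⁻¹' {p}),
        ∀ γ : LoopSp X p,
          (h (TopPi1.mk γ)).1 =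
            Quotient.mk (pathHomSetoid X p) ⟨γ.1, γ.2.1⟩) ∧
      ∀ (x : X) (α : Path p x),
        ∃ h : TopPi1 X p ≃ₜ ↥(endMap X p ⁻¹' {x}),
          ∀ γ : LoopSp X p,
            (h (TopPi1.mk γ)).1 =
              Quotient.mk (pathHomSetoid X p)
                ⟨((Path.mk γ.1 γ.2.1 γ.2.2).trans α).toContinuousMap,
                  ((Path.mk γ.1 γ.2.1 γ.2.2).trans α).source'⟩ := by
  constructor
  · refine ⟨Stmt10Aux.theHomeo (Path.refl p), fun γ => ?_⟩
    rw [Stmt10Aux.theHomeo_apply]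
    exact Quot.sound ⟨Path.Homotopy.transRefl (Stmt10Aux.toPath γ)⟩
  · intro x α
    exact ⟨Stmt10Aux.theHomeo α, fun γ => rfl⟩
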